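/- Define E(α,β) = Σ_{a∈{0,1}} [P(a,a|α,β) − P(a,ā|α,β)] where P(a,s|α,β) = (1/2)|⟨φ_{α1}^a|φ_{β0}^{s̄}⟩|² with the states |φ_{αα'}^a⟩ as in the paper. Then the CHSH quantity I = E(0,0) + E(0,1) − E(1,0) + E(1,1) equals −2√2, hence |I| > 2, saturating the Tsirelson bound 2√2. -/

import Mathlib

open scoped InnerProductSpace
open Real

noncomputable section

abbrev Qubit := EuclideanSpace ℂ (Fin 2)

def e (a : Fin 2) : Qubit := EuclideanSpace.single a 1

def tens (u v : Qubit) : EuclideanSpace ℂ (Fin 2 × Fin 2) :=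
  (WithLp.equiv 2 _).symm (fun p => u p.1 * v p.2)

def singlet : EuclideanSpace ℂ (Fin 2 × Fin 2) :=
  ((1 / Real.sqrt 2 : ℝ) : ℂ) • (tens (e 0) (e 1) - tens (e 1) (e 0))

def phi (α α' a : Fin 2) : Qubit :=
  if α' = 0 then
    (if α = 0 then e a
     else ((1 / Real.sqrt 2 : ℝ) : ℂ) • (e 0 + ((-1 : ℂ) ^ (a : ℕ)) • e 1))
  else
    (if α = 0 then
      ((Real.cos (π / 8) : ℝ) : ℂ) • e a
        + ((-1 : ℂ) ^ (a : ℕ) * ((Real.sin (π / 8) : ℝ) : ℂ)) • e (1 - a)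
     else
      ((Real.sin (π / 8) : ℝ) : ℂ) • e a
        + ((-1 : ℂ) ^ (a : ℕ) * ((Real.cos (π / 8) : ℝ) : ℂ)) • e (1 - a))

def Pdist (a s α β : Fin 2) : ℝ := (1 / 2) * ‖⟪phi α 1 a, phi β 0 (1 - s)⟫_ℂ‖ ^ 2

def Ecorr (α β : Fin 2) : ℝ := ∑ a : Fin 2, (Pdist a a α β - Pdist a (1 - a) α β)


lemma sqrt2_facts : Real.sqrt 2 ^ 2 = 2 ∧ √(2 + √2) * √(2 - √2) = √2 ∧ (√2)⁻¹ = √2 / 2 := by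
  have h2 : Real.sqrt 2 ^ 2 = 2 := Real.sq_sqrt (by norm_num)
  refine ⟨h2, ?_, ?_⟩
  · rw [← Real.sqrt_mul (by positivity), show (2 + √2) * (2 - √2) = 4 - √2^2 by ring,
      Real.sq_sqrt (by norm_num)]
    norm_num
  · rw [inv_eq_one_div, div_eq_div_iff (by positivity) (by norm_num)]
    nlinarith [h2]

lemma Ecorr00 : Ecorr 0 0 = -(Real.sqrt 2 / 2) := by
  obtain ⟨h2, hxy, hinv⟩ := sqrt2_facts
  have hs : √2 ≤ 2 := by nlinarith [Real.sqrt_nonneg 2]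
  simp only [Ecorr, Pdist, phi, Fin.sum_univ_two]
  norm_num [e, inner_add_left, inner_add_right, inner_smul_left, inner_smul_right,
    EuclideanSpace.inner_single_left, EuclideanSpace.single_apply]
  rw [abs_of_nonneg (Real.sqrt_nonneg _), abs_of_nonneg (Real.sqrt_nonneg _),
    div_pow, div_pow, Real.sq_sqrt (by linarith [Real.sqrt_nonneg 2]), Real.sq_sqrt (by linarith [Real.sqrt_nonneg 2])]
  ring

lemma Ecorr10 : Ecorr 1 0 = Real.sqrt 2 / 2 := by
  obtain ⟨h2, hxy, hinv⟩ := sqrt2_facts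
  have hs : √2 ≤ 2 := by nlinarith [Real.sqrt_nonneg 2]
  simp only [Ecorr, Pdist, phi, Fin.sum_univ_two]
  norm_num [e, inner_add_left, inner_add_right, inner_smul_left, inner_smul_right,
    EuclideanSpace.inner_single_left, EuclideanSpace.single_apply]
  rw [abs_of_nonneg (Real.sqrt_nonneg _), abs_of_nonneg (Real.sqrt_nonneg _),
    div_pow, div_pow, Real.sq_sqrt (by linarith [Real.sqrt_nonneg 2]), Real.sq_sqrt (by linarith [Real.sqrt_nonneg 2])]
  ring

lemma Ecorr01 : Ecorr 0 1 = -(Real.sqrt 2 / 2) := by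
  obtain ⟨h2, hxy, hinv⟩ := sqrt2_facts
  simp only [Ecorr, Pdist, phi, Fin.sum_univ_two]
  norm_num [e, inner_add_left, inner_add_right, inner_smul_left, inner_smul_right,
    EuclideanSpace.inner_single_left, EuclideanSpace.single_apply]
  simp only [map_ofNat]
  norm_cast
  simp only [sq_abs, hinv]
  ring_nf
  have key : ∀ x y z : ℝ, ‖(x : ℂ) * (y : ℂ) * (1/2) + (z : ℂ)‖ = |x*y*(1/2) + z| := by
    intro x y z
    have : (x : ℂ) * (y : ℂ) * (1/2) + (z : ℂ) = ((x*y*(1/2)+z : ℝ) : ℂ) := by push_cast; ring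
    rw [this, Complex.norm_real, Real.norm_eq_abs]
  have key2 : ∀ x y w v : ℝ, ‖(x : ℂ) * (y : ℂ) * (1/2) + (w : ℂ) * (v : ℂ) * (1/2)‖ = |x*y*(1/2) + w*v*(1/2)| := by
    intro x y w v
    have : (x : ℂ) * (y : ℂ) * (1/2) + (w : ℂ) * (v : ℂ) * (1/2) = ((x*y*(1/2)+w*v*(1/2) : ℝ) : ℂ) := by push_cast; ring
    rw [this, Complex.norm_real, Real.norm_eq_abs]
  simp only [key, key2, Real.norm_eq_abs, sq_abs]
  ring_nf
  rw [h2]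
  nlinarith [hxy]

lemma Ecorr11 : Ecorr 1 1 = -(Real.sqrt 2 / 2) := by
  obtain ⟨h2, hxy, hinv⟩ := sqrt2_facts
  simp only [Ecorr, Pdist, phi, Fin.sum_univ_two]
  norm_num [e, inner_add_left, inner_add_right, inner_smul_left, inner_smul_right,
    EuclideanSpace.inner_single_left, EuclideanSpace.single_apply]
  simp only [map_ofNat]
  norm_cast
  simp only [sq_abs, hinv]
  ring_nf
  have key : ∀ x y z : ℝ, ‖(x : ℂ) * (y : ℂ) * (1/2) + (z : ℂ)‖ = |x*y*(1/2) + z| := by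
    intro x y z
    have : (x : ℂ) * (y : ℂ) * (1/2) + (z : ℂ) = ((x*y*(1/2)+z : ℝ) : ℂ) := by push_cast; ring
    rw [this, Complex.norm_real, Real.norm_eq_abs]
  have key2 : ∀ x y w v : ℝ, ‖(x : ℂ) * (y : ℂ) * (1/2) + (w : ℂ) * (v : ℂ) * (1/2)‖ = |x*y*(1/2) + w*v*(1/2)| := by
    intro x y w v
    have : (x : ℂ) * (y : ℂ) * (1/2) + (w : ℂ) * (v : ℂ) * (1/2) = ((x*y*(1/2)+w*v*(1/2) : ℝ) : ℂ) := by push_cast; ring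
    rw [this, Complex.norm_real, Real.norm_eq_abs]
  simp only [key, key2, Real.norm_eq_abs, sq_abs]
  ring_nf
  rw [h2]
  nlinarith [hxy]

theorem chsh_value_singlet :
    Ecorr 0 0 + Ecorr 0 1 - Ecorr 1 0 + Ecorr 1 1 = -(2 * Real.sqrt 2) ∧
    2 < |Ecorr 0 0 + Ecorr 0 1 - Ecorr 1 0 + Ecorr 1 1| := by
  have h2 : Real.sqrt 2 ^ 2 = 2 := Real.sq_sqrt (by norm_num)
  have h1 : (1:ℝ) < √2 := by nlinarith [Real.sqrt_nonneg 2]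
  rw [Ecorr00, Ecorr01, Ecorr10, Ecorr11]
  constructor
  · ring
  · rw [show -(√2/2) + -(√2/2) - √2/2 + -(√2/2) = -(2*√2) by ring, abs_neg,
      abs_of_nonneg (by positivity)]
    linarith
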